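/- Let X be a positive random variable with ‖X‖_∞ < ∞ whose β function has a limit β₀ at ‖X‖_∞ with 0 ≤ β₀ < 1, define k(ξ) = −log P(X > x) under the change of variable ξ = −log(‖X‖_∞ − x). Then lim_{ξ→∞} k'(ξ) = β₀/(1 − β₀). -/

import Mathlib

open MeasureTheory Set Filter

/-- Let `X` be a positive random variable with `‖X‖_∞ = M < ∞` whose β function has a
limit `β₀ ∈ [0,1)` at `M`. With `k(ξ) = −log P(X > x)` under `ξ = −log(M − x)`, one has
`lim_{ξ→∞} k'(ξ) = β₀/(1 − β₀)`. -/
theorem stmt_18 {Ω : Type*} [MeasurableSpace Ω] (μ : Measure Ω) [IsProbabilityMeasure μ]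
    (X : Ω → ℝ) (hXm : Measurable X) (hXpos : ∀ᵐ ω ∂μ, 0 < X ω)
    (hX : Integrable X μ)
    (M : ℝ) (hM0 : 0 < M) (hM : eLpNorm X ⊤ μ = ENNReal.ofReal M)
    (w w' h : ℝ → ℝ)
    (hw : w = fun x => (μ {ω | x < X ω}).toReal)
    (hh : h = fun x => ∫ t in Set.Ioi x, w t)
    (hwpos : ∀ x ∈ Set.Ico (0:ℝ) M, 0 < w x)
    (hw' : ∀ x ∈ Set.Ico (0:ℝ) M, HasDerivAt w (w' x) x)
    (hwc : ContinuousOn w' (Set.Ico 0 M))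
    (β₀ : ℝ) (hβ0 : 0 ≤ β₀) (hβ1 : β₀ < 1)
    (hbeta : Filter.Tendsto (fun x => (-(w' x)) * h x / (w x) ^ 2)
      (nhdsWithin M (Set.Iio M)) (nhds β₀)) :
    Filter.Tendsto
      (deriv (fun ξ => -Real.log (w (M - Real.exp (-ξ)))))
      Filter.atTop (nhds (β₀ / (1 - β₀))) := by
  set l := nhdsWithin M (Set.Iio M) with hl
  set B : ℝ → ℝ := fun x => (-(w' x)) * h x / (w x) ^ 2 with hBdef
  set g : ℝ → ℝ := fun x => h x / w x with hgdef
  -- basic facts about w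
  have hwnn : ∀ t, 0 ≤ w t := by intro t; rw [hw]; exact ENNReal.toReal_nonneg
  have hwanti : Antitone w := by
    intro a b hab
    rw [hw]
    exact ENNReal.toReal_mono (measure_ne_top μ _)
      (measure_mono fun ω hω => lt_of_le_of_lt hab hω)
  have hw0 : ∀ t, M ≤ t → w t = 0 := by
    intro t ht
    have h1 : ∀ᵐ ω ∂μ, X ω ≤ M := by
      have h2 := enorm_ae_le_eLpNormEssSup X μ
      rw [← eLpNorm_exponent_top, hM] at h2
      filter_upwards [h2] with ω hω
      have h3 : ‖X ω‖ ≤ M := by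
        rw [← ofReal_norm_eq_enorm] at hω
        exact (ENNReal.ofReal_le_ofReal_iff hM0.le).1 hω
      exact le_trans (le_abs_self _) h3
    have h4 : μ {ω | t < X ω} = 0 := by
      refine measure_mono_null ?_ (ae_iff.1 h1)
      intro ω hω
      have hω' : t < X ω := hω
      exact fun h5 => absurd hω' (not_lt.2 (h5.trans ht))
    rw [hw]; simp [h4]
  have hwint : ∀ a b : ℝ, IntervalIntegrable w volume a b := fun a b =>
    hwanti.intervalIntegrable
  -- h as an interval integral
  have hhI : ∀ x : ℝ, x ≤ M → h x = ∫ t in x..M, w t := by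
    intro x hx
    rw [hh, intervalIntegral.integral_of_le hx]
    show (∫ t in Set.Ioi x, w t) = ∫ t in Set.Ioc x M, w t
    have hsplit : Set.Ioi x = Set.Ioc x M ∪ Set.Ioi M := (Set.Ioc_union_Ioi_eq_Ioi hx).symm
    have hIM : IntegrableOn w (Set.Ioi M) volume :=
      IntegrableOn.congr_fun integrableOn_zero
        (fun t ht => (hw0 t (le_of_lt ht)).symm) measurableSet_Ioi
    rw [hsplit, setIntegral_union (Set.Ioc_disjoint_Ioi le_rfl) measurableSet_Ioi
      (hwint x M).1 hIM]
    have hz : ∫ t in Set.Ioi M, w t = 0 := by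
      apply setIntegral_eq_zero_of_forall_eq_zero
      intro t ht; exact hw0 t (le_of_lt ht)
    rw [hz, add_zero]
  have hcontw : ∀ x ∈ Set.Ico (0:ℝ) M, ContinuousAt w x := fun x hx => (hw' x hx).continuousAt
  have hwmeas : Measurable w := hwanti.measurable
  -- derivative of h
  have hderivh : ∀ x ∈ Set.Ico (0:ℝ) M, HasDerivAt h (-(w x)) x := by
    intro x hx
    have hd : HasDerivAt (fun u => ∫ t in u..M, w t) (-(w x)) x :=
      intervalIntegral.integral_hasDerivAt_left (hwint x M)
        ⟨Set.univ, univ_mem, (hwmeas.aestronglyMeasurable).restrict⟩ (hcontw x hx)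
    have hev : h =ᶠ[nhds x] fun u => ∫ t in u..M, w t := by
      filter_upwards [Iio_mem_nhds hx.2] with y hy using hhI y hy.le
    exact hd.congr_of_eventuallyEq hev
  -- positivity and upper bound for h
  have hhpos : ∀ x ∈ Set.Ico (0:ℝ) M, 0 < h x := by
    intro x hx
    set m := (x + M)/2 with hm
    have hxm : x < m := by rw [hm]; linarith [hx.2]
    have hmM : m < M := by rw [hm]; linarith [hx.2]
    have hm0 : (0:ℝ) ≤ m := by rw [hm]; linarith [hx.1]
    rw [hhI x hx.2.le, ← intervalIntegral.integral_add_adjacent_intervals (hwint x m) (hwint m M)]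
    have h2 : 0 ≤ ∫ t in m..M, w t :=
      intervalIntegral.integral_nonneg hmM.le fun t _ => hwnn t
    have h3 : (m - x) * w m ≤ ∫ t in x..m, w t := by
      have := intervalIntegral.integral_mono_on hxm.le
        (intervalIntegrable_const (c := w m)) (hwint x m)
        (fun t ht => hwanti ht.2)
      simpa [smul_eq_mul] using this
    have h4 : 0 < (m - x) * w m :=
      mul_pos (by linarith) (hwpos m ⟨hm0, hmM⟩)
    linarith
  have hhle : ∀ x ∈ Set.Ico (0:ℝ) M, h x ≤ (M - x) * w x := by
    intro x hx
    rw [hhI x hx.2.le]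
    have := intervalIntegral.integral_mono_on hx.2.le (hwint x M)
      (intervalIntegrable_const (c := w x)) (fun t ht => hwanti ht.1)
    simpa [smul_eq_mul, mul_comm] using this
  -- g and its derivative
  have hgpos : ∀ x ∈ Set.Ico (0:ℝ) M, 0 < g x := fun x hx =>
    div_pos (hhpos x hx) (hwpos x hx)
  have hgle : ∀ x ∈ Set.Ico (0:ℝ) M, g x ≤ M - x := by
    intro x hx
    rw [hgdef]
    exact (div_le_iff₀ (hwpos x hx)).2 (by simpa [mul_comm] using hhle x hx)
  have hderivg : ∀ x ∈ Set.Ico (0:ℝ) M, HasDerivAt g (B x - 1) x := by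
    intro x hx
    have hD := (hderivh x hx).div (hw' x hx) (hwpos x hx).ne'
    refine HasDerivAt.congr_deriv (f := g) hD ?_
    have hwx := (hwpos x hx).ne'
    rw [hBdef]
    field_simp
    ring
  -- basic filter facts
  have hmem : ∀ᶠ x in l, x ∈ Set.Ico (0:ℝ) M := by
    filter_upwards [Ioo_mem_nhdsLT_of_mem (Set.mem_Ioc.2 ⟨hM0, le_rfl⟩)] with x hx
    exact ⟨hx.1.le, hx.2⟩
  have hlne : l.NeBot := by rw [hl]; infer_instance
  -- g → 0
  have hg0 : Tendsto g l (nhds 0) := by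
    have hMx : Tendsto (fun x => M - x) l (nhds 0) := by
      have : Tendsto (fun x : ℝ => M - x) (nhds M) (nhds (M - M)) :=
        (tendsto_const_nhds.sub tendsto_id)
      rw [sub_self] at this
      exact this.mono_left nhdsWithin_le_nhds
    refine squeeze_zero' ?_ ?_ hMx
    · filter_upwards [hmem] with x hx using (hgpos x hx).le
    · filter_upwards [hmem] with x hx using hgle x hx
  -- main estimate : g x / (M - x) → 1 - β₀
  have hgr : Tendsto (fun x => g x / (M - x)) l (nhds (1 - β₀)) := by
    rw [Metric.tendsto_nhds]
    intro ε hε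
    have hB2 := Metric.tendsto_nhds.1 hbeta (ε/2) (by linarith)
    obtain ⟨x₀, hx₀M, hx₀⟩ := mem_nhdsLT_iff_exists_Ioo_subset.1
      ((hB2.and hmem).filter_mono (le_refl l))
    set c := max x₀ 0 with hc
    have hcM : c < M := max_lt hx₀M hM0
    have hsub : Set.Ioo c M ⊆ {x | dist (B x) β₀ < ε/2 ∧ x ∈ Set.Ico 0 M} := by
      intro t ht
      exact hx₀ ⟨lt_of_le_of_lt (le_max_left _ _) ht.1, ht.2⟩
    have key : ∀ x ∈ Set.Ioo c M,
        (1 - β₀ - ε/2) * (M - x) ≤ g x ∧ g x ≤ (1 - β₀ + ε/2) * (M - x) := by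
      intro x hx
      have hx0 : (0:ℝ) ≤ x := le_trans (le_max_right _ _) hx.1.le
      have hxM : x < M := hx.2
      have hIsub : Set.Ico x M ⊆ Set.Ico (0:ℝ) M := fun t ht => ⟨le_trans hx0 ht.1, ht.2⟩
      have hIsub2 : Set.Ioo x M ⊆ Set.Ioo c M := fun t ht => ⟨lt_of_lt_of_le hx.1 ht.1.le, ht.2⟩
      have hgc : ContinuousOn g (Set.Ico x M) := fun t ht =>
        ((hderivg t (hIsub ht)).continuousAt).continuousWithinAt
      have hint : interior (Set.Ico x M) = Set.Ioo x M := interior_Ico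
      -- upper bound
      have hup : ∀ y ∈ Set.Ico x M, g x ≤ g y + (1 - β₀ + ε/2) * (y - x) := by
        have hmono : MonotoneOn (fun t => g t + (1 - β₀ + ε/2) * t) (Set.Ico x M) := by
          apply monotoneOn_of_hasDerivWithinAt_nonneg (convex_Ico x M)
            (f' := fun t => (B t - 1) + (1 - β₀ + ε/2))
          · exact hgc.add (continuous_const.mul continuous_id).continuousOn
          · intro t ht
            rw [hint] at ht
            have hd := (hderivg t (hIsub ⟨ht.1.le, ht.2⟩)).add
              ((hasDerivAt_id t).const_mul (1 - β₀ + ε/2))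
            exact hd.hasDerivWithinAt.congr_deriv (by ring)
          · intro t ht
            rw [hint] at ht
            have hBt := (hsub (hIsub2 ht)).1
            rw [Real.dist_eq, abs_lt] at hBt
            linarith [hBt.1]
        intro y hy
        have := hmono (Set.mem_Ico.2 ⟨le_rfl, hxM⟩) hy hy.1
        simp only at this
        nlinarith
      -- lower bound
      have hlow : ∀ y ∈ Set.Ico x M, g y + (1 - β₀ - ε/2) * (y - x) ≤ g x := by
        have hanti : AntitoneOn (fun t => g t + (1 - β₀ - ε/2) * t) (Set.Ico x M) := by
          apply antitoneOn_of_hasDerivWithinAt_nonpos (convex_Ico x M)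
            (f' := fun t => (B t - 1) + (1 - β₀ - ε/2))
          · exact hgc.add (continuous_const.mul continuous_id).continuousOn
          · intro t ht
            rw [hint] at ht
            have hd := (hderivg t (hIsub ⟨ht.1.le, ht.2⟩)).add
              ((hasDerivAt_id t).const_mul (1 - β₀ - ε/2))
            exact hd.hasDerivWithinAt.congr_deriv (by ring)
          · intro t ht
            rw [hint] at ht
            have hBt := (hsub (hIsub2 ht)).1
            rw [Real.dist_eq, abs_lt] at hBt
            linarith [hBt.2]
        intro y hy
        have := hanti (Set.mem_Ico.2 ⟨le_rfl, hxM⟩) hy hy.1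
        simp only at this
        nlinarith
      have hIooMem : Set.Ioo x M ∈ l := Ioo_mem_nhdsLT_of_mem (Set.mem_Ioc.2 ⟨hxM, le_rfl⟩)
      have hyl : Tendsto (fun y : ℝ => y) l (nhds M) :=
        tendsto_id.mono_left nhdsWithin_le_nhds
      constructor
      · -- lower
        have htend : Tendsto (fun y => g y + (1 - β₀ - ε/2) * (y - x)) l
            (nhds (0 + (1 - β₀ - ε/2) * (M - x))) :=
          hg0.add ((tendsto_const_nhds.mul (hyl.sub tendsto_const_nhds)))
        rw [zero_add] at htend
        exact le_of_tendsto htend (by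
          filter_upwards [hIooMem] with y hy using hlow y ⟨hy.1.le, hy.2⟩)
      · -- upper
        have htend : Tendsto (fun y => g y + (1 - β₀ + ε/2) * (y - x)) l
            (nhds (0 + (1 - β₀ + ε/2) * (M - x))) :=
          hg0.add ((tendsto_const_nhds.mul (hyl.sub tendsto_const_nhds)))
        rw [zero_add] at htend
        exact ge_of_tendsto htend (by
          filter_upwards [hIooMem] with y hy using hup y ⟨hy.1.le, hy.2⟩)
    filter_upwards [Ioo_mem_nhdsLT_of_mem (Set.mem_Ioc.2 ⟨hcM, le_rfl⟩)] with x hx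
    have hk := key x hx
    have hMx : 0 < M - x := by linarith [hx.2]
    have h1 : 1 - β₀ - ε/2 ≤ g x / (M - x) := (le_div_iff₀ hMx).2 (by linarith [hk.1])
    have h2 : g x / (M - x) ≤ 1 - β₀ + ε/2 := (div_le_iff₀ hMx).2 (by linarith [hk.2])
    rw [Real.dist_eq, abs_lt]
    constructor <;> linarith
  -- invert
  have h1β : (1:ℝ) - β₀ ≠ 0 := by linarith
  have hGinv : Tendsto (fun x => (M - x) / g x) l (nhds (1 - β₀)⁻¹) := by
    have hinv := hgr.inv₀ h1β
    refine hinv.congr' ?_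
    filter_upwards with x
    rw [inv_div]
  -- F → β₀ / (1 - β₀)
  have hF : Tendsto (fun x => (-(w' x)) * (M - x) / w x) l (nhds (β₀ / (1 - β₀))) := by
    have hmul := hbeta.mul hGinv
    rw [← div_eq_mul_inv] at hmul
    refine hmul.congr' ?_
    filter_upwards [hmem] with x hx
    have hwx := (hwpos x hx).ne'
    have hhx := (hhpos x hx).ne'
    show B x * ((M - x) / g x) = -w' x * (M - x) / w x
    rw [hBdef, hgdef]
    field_simp
  -- the substitution tends to M from below
  have hcomp : Tendsto (fun ξ : ℝ => M - Real.exp (-ξ)) atTop l := by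
    rw [hl, tendsto_nhdsWithin_iff]
    constructor
    · have hexp : Tendsto (fun ξ : ℝ => Real.exp (-ξ)) atTop (nhds 0) :=
        Real.tendsto_exp_atBot.comp tendsto_neg_atTop_atBot
      have h6 : Tendsto (fun ξ : ℝ => M - Real.exp (-ξ)) atTop (nhds (M - 0)) :=
        Tendsto.sub tendsto_const_nhds hexp
      simpa using h6
    · exact Eventually.of_forall fun ξ => sub_lt_self _ (Real.exp_pos _)
  -- computing the derivative
  have hevderiv : ∀ᶠ ξ in atTop,
      (fun x => (-(w' x)) * (M - x) / w x) (M - Real.exp (-ξ))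
        = deriv (fun ξ => -Real.log (w (M - Real.exp (-ξ)))) ξ := by
    filter_upwards [eventually_gt_atTop (-Real.log M)] with ξ hξ
    set x := M - Real.exp (-ξ) with hxdef
    have hex : Real.exp (-ξ) < M := by
      calc Real.exp (-ξ) < Real.exp (Real.log M) := Real.exp_lt_exp.2 (by linarith)
        _ = M := Real.exp_log hM0
    have hxI : x ∈ Set.Ico (0:ℝ) M := ⟨by rw [hxdef]; linarith,
      by rw [hxdef]; exact sub_lt_self _ (Real.exp_pos _)⟩
    have hd1 : HasDerivAt (fun ξ : ℝ => M - Real.exp (-ξ)) (Real.exp (-ξ)) ξ := by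
      have hexp : HasDerivAt (fun ξ : ℝ => Real.exp (-ξ)) (-Real.exp (-ξ)) ξ := by
        have := (hasDerivAt_neg ξ).exp
        simpa using this
      simpa using hexp.const_sub M
    have hd2 : HasDerivAt (fun ξ : ℝ => w (M - Real.exp (-ξ))) (w' x * Real.exp (-ξ)) ξ :=
      (hw' x hxI).comp ξ hd1
    have hd3 : HasDerivAt (fun ξ : ℝ => Real.log (w (M - Real.exp (-ξ))))
        (w' x * Real.exp (-ξ) / w x) ξ := hd2.log (hwpos x hxI).ne'
    have hd4 : HasDerivAt (fun ξ => -Real.log (w (M - Real.exp (-ξ)))) _ ξ := hd3.neg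
    rw [hd4.deriv]
    have hxe : Real.exp (-ξ) = M - x := by rw [hxdef]; ring
    rw [hxe]
    ring
  exact (hF.comp hcomp).congr' hevderiv
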